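/- If u : [−1,1] → ℝ is C², satisfies −u''(s) + (u'(s))²/(1 − u(s)) = λ for s ≠ 0 with u(s) < 1 for s ≠ 0, u(−1)=u(1)=0, 0 ≤ u ≤ 1, and u(0) = 1, then u''(0) = −λ/3. -/

import Mathlib

open Set Filter Topology

theorem stmt3 (lam : ℝ) (hlam : 0 < lam) (u : ℝ → ℝ) (hu : ContDiff ℝ 2 u)
    (heq : ∀ s ∈ Set.Icc (-1 : ℝ) 1, s ≠ 0 →
      -(deriv (deriv u) s) + (deriv u s) ^ 2 / (1 - u s) = lam)
    (hlt : ∀ s ∈ Set.Icc (-1 : ℝ) 1, s ≠ 0 → u s < 1)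
    (hb1 : u (-1) = 0) (hb2 : u 1 = 0)
    (hrange : ∀ s ∈ Set.Icc (-1 : ℝ) 1, 0 ≤ u s ∧ u s ≤ 1)
    (h0 : u 0 = 1) :
    deriv (deriv u) 0 = -lam / 3 := by
  set v := deriv u with hv
  set w := deriv (deriv u) with hw
  have hdiffu : Differentiable ℝ u := hu.differentiable (by norm_num)
  have hcd1 : ContDiff ℝ 1 v := by
    have h2 : ContDiff ℝ ((1 : WithTop ℕ∞) + 1) u := by norm_num; exact hu
    exact (contDiff_succ_iff_deriv.mp h2).2.2
  have hdv : ∀ s : ℝ, HasDerivAt v (w s) s :=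
    fun s => ((hcd1.differentiable one_ne_zero) s).hasDerivAt
  have hdu : ∀ s : ℝ, HasDerivAt u (v s) s := fun s => (hdiffu s).hasDerivAt
  set F : ℝ → ℝ := fun x => (v x) ^ 2 * (1 - u x) ^ 2 - (2 * lam / 3) * (1 - u x) ^ 3 with hF
  have hD : ∀ s : ℝ, HasDerivAt F
      (2 * v s * w s * (1 - u s) ^ 2 + (v s) ^ 2 * (2 * (1 - u s) * (-(v s)))
        - (2 * lam / 3) * (3 * (1 - u s) ^ 2 * (-(v s)))) s := by
    intro s
    have h1 : HasDerivAt (fun x => 1 - u x) (-(v s)) s := (hdu s).const_sub 1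
    have h2 : HasDerivAt (fun x => (v x) ^ 2) (2 * v s * w s) s := by
      have := (hdv s).pow 2
      norm_num at this
      exact this
    have h3 : HasDerivAt (fun x => (1 - u x) ^ 2) (2 * (1 - u s) * (-(v s))) s := by
      have := h1.pow 2; norm_num at this; exact this.congr_deriv (by ring)
    have h4 : HasDerivAt (fun x => (1 - u x) ^ 3) (3 * (1 - u s) ^ 2 * (-(v s))) s := by
      have := h1.pow 3; norm_num at this; exact this.congr_deriv (by ring)
    exact (h2.mul h3).sub (h4.const_mul (2 * lam / 3))
  have hzero : ∀ s ∈ Ico (0 : ℝ) 1, HasDerivWithinAt F 0 (Ici s) s := by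
    intro s hs
    rcases eq_or_ne s 0 with rfl | hne
    · have hD0 : (2 * v 0 * w 0 * (1 - u 0) ^ 2 + (v 0) ^ 2 * (2 * (1 - u 0) * (-(v 0)))
        - (2 * lam / 3) * (3 * (1 - u 0) ^ 2 * (-(v 0)))) = 0 := by
        rw [h0]; ring
      have := hD 0
      rw [hD0] at this
      exact this.hasDerivWithinAt
    · have hs1 : s ∈ Icc (-1 : ℝ) 1 := ⟨by linarith [hs.1], le_of_lt hs.2⟩
      have hne0 : (1 : ℝ) - u s ≠ 0 := by have := hlt s hs1 hne; intro h; linarith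
      have heqs := heq s hs1 hne
      have h5 : (v s) ^ 2 = (lam + w s) * (1 - u s) := by
        have hdiv : (v s) ^ 2 / (1 - u s) = lam + w s := by linarith
        exact (div_eq_iff hne0).mp hdiv
      have hD0 : (2 * v s * w s * (1 - u s) ^ 2 + (v s) ^ 2 * (2 * (1 - u s) * (-(v s)))
        - (2 * lam / 3) * (3 * (1 - u s) ^ 2 * (-(v s)))) = 0 := by
        linear_combination (-2 * v s * (1 - u s)) * h5
      have := hD s
      rw [hD0] at this
      exact this.hasDerivWithinAt
  have hvc : Continuous v := hcd1.continuous
  have huc : Continuous u := hu.continuous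
  have hFc : Continuous F := by
    apply Continuous.sub
    · exact (hvc.pow 2).mul ((continuous_const.sub huc).pow 2)
    · exact continuous_const.mul ((continuous_const.sub huc).pow 3)
  have hconst := constant_of_has_deriv_right_zero hFc.continuousOn hzero
  have hF0 : F 0 = 0 := by simp [hF, h0]
  have hwval : ∀ s ∈ Ioo (0 : ℝ) 1, w s = -lam / 3 := by
    intro s hs
    have hs1 : s ∈ Icc (-1 : ℝ) 1 := ⟨by linarith [hs.1], hs.2.le⟩
    have hpos : 0 < 1 - u s := by have := hlt s hs1 (ne_of_gt hs.1); linarith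
    have hFs : F s = 0 := by rw [hconst s ⟨hs.1.le, hs.2.le⟩, hF0]
    have h2 : (v s) ^ 2 * (1 - u s) ^ 2 = (2 * lam / 3) * (1 - u s) ^ 3 := by
      have := hFs; simp only [hF] at this; linarith
    have hratio : (v s) ^ 2 = (2 * lam / 3) * (1 - u s) := by
      have hne2 : (1 - u s) ^ 2 ≠ 0 := pow_ne_zero 2 (ne_of_gt hpos)
      have h3 : (v s) ^ 2 * (1 - u s) ^ 2 = ((2 * lam / 3) * (1 - u s)) * (1 - u s) ^ 2 := by
        rw [h2]; ring
      exact mul_right_cancel₀ hne2 h3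
    have heqs := heq s hs1 (ne_of_gt hs.1)
    have hdiv : (v s) ^ 2 / (1 - u s) = 2 * lam / 3 := by
      rw [hratio]; field_simp
    rw [hdiv] at heqs
    linarith
  have hwc : Continuous w := hcd1.continuous_deriv le_rfl
  have h1 : Tendsto w (𝓝[>] (0 : ℝ)) (𝓝 (w 0)) :=
    (hwc.continuousAt.tendsto).mono_left nhdsWithin_le_nhds
  have hmem : Ioo (0 : ℝ) 1 ∈ 𝓝[>] (0 : ℝ) := Ioo_mem_nhdsGT_of_mem (by norm_num)
  have h2 : Tendsto w (𝓝[>] (0 : ℝ)) (𝓝 (-lam / 3)) := by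
    apply Tendsto.congr' _ tendsto_const_nhds
    filter_upwards [hmem] with s hs
    exact (hwval s hs).symm
  exact tendsto_nhds_unique h1 h2
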